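/- arXiv:1604.00738 — 3 statements merged into one kernel-verified Lean document; each statement's English description precedes it below -/
import Mathlib

section
/- The number fields K₁ = ℚ[x]/(x^4 - 4x^3 + 46x^2 - 148x + 1369) and K₂ = ℚ[x]/(x^4 + 4x^3 + 6x^2 + 164x + 1681) are linearly disjoint over ℚ; equivalently, since both have degree 4, any field embeddable into both K₁ and K₂ equals ℚ. -/
open Polynomial

/-- `K₁ = ℚ[x]/(x⁴ - 4x³ + 46x² - 148x + 1369)`. -/
noncomputable def KFrob37 : Type :=
  AdjoinRoot ((X : Polynomial ℚ) ^ 4 - 4 * X ^ 3 + 46 * X ^ 2 - 148 * X + C 1369)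

/-- `K₂ = ℚ[x]/(x⁴ + 4x³ + 6x² + 164x + 1681)`. -/
noncomputable def KFrob41 : Type :=
  AdjoinRoot ((X : Polynomial ℚ) ^ 4 + 4 * X ^ 3 + 6 * X ^ 2 + 164 * X + C 1681)

noncomputable instance : CommRing KFrob37 :=
  inferInstanceAs (CommRing (AdjoinRoot _))
noncomputable instance : CommRing KFrob41 :=
  inferInstanceAs (CommRing (AdjoinRoot _))
noncomputable instance : Algebra ℚ KFrob37 :=
  inferInstanceAs (Algebra ℚ (AdjoinRoot _))
noncomputable instance : Algebra ℚ KFrob41 :=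
  inferInstanceAs (Algebra ℚ (AdjoinRoot _))

namespace Frob3741Aux

/-! ### Rationals whose square is a given non-square natural number do not exist -/

lemma rat_sq_ne (n s : ℕ) (hs1 : s * s < n) (hs2 : n < (s+1) * (s+1)) (r : ℚ) :
    r ^ 2 ≠ (n : ℚ) := by
  intro h
  have hnum : r.num ^ 2 = (n : ℤ) := by
    have := congrArg Rat.num h
    rwa [Rat.num_pow, Rat.num_natCast] at this
  have hm : r.num.natAbs * r.num.natAbs = n := by
    have := congrArg Int.natAbs hnum
    simpa [pow_two, Int.natAbs_mul] using this
  rcases le_or_gt r.num.natAbs s with hle | hlt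
  · exact absurd hm (by have := Nat.mul_le_mul hle hle; omega)
  · exact absurd hm (by
      have := Nat.mul_le_mul hlt hlt
      have hss : s.succ * s.succ = (s+1)*(s+1) := rfl
      omega)

/-! ### Elimination over ℚ : classification of square roots of rationals in `K₁` -/

lemma elimK1 (a b c e q : ℚ)
    (h3 : 2*a*e + 2*b*c + 4*c^2 + 8*b*e - 60*c*e - 156*e^2 = 0)
    (h2 : b^2 + 2*a*c - 46*c^2 - 92*b*e - 72*c*e + 603*e^2 = 0)
    (h1 : 2*a*b + 148*c^2 + 296*b*e - 1554*c*e - 9916*e^2 = 0)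
    (h0 : a^2 - 1369*c^2 - 2738*b*e - 10952*c*e + 41070*e^2 = q) :
    (∃ r : ℚ, q = r^2) ∨ (∃ r : ℚ, r ≠ 0 ∧ q = 2*r^2) := by
  rcases eq_or_ne e 0 with he | he
  · subst he
    rcases eq_or_ne c 0 with hc | hc
    · subst hc
      have hb : b = 0 := by nlinarith [h2]
      subst hb
      exact Or.inl ⟨a, by linarith⟩
    · exfalso
      have hc2 : 0 < c^2 := by positivity
      have hbc : b = -2*c := by
        rcases mul_eq_zero.mp (show 2*c*(b + 2*c) = 0 by linear_combination h3) with h | h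
        · exact absurd (by linarith : c = 0) hc
        · linarith
      subst hbc
      have hac : a = 21*c := by
        rcases mul_eq_zero.mp (show 2*c*(a - 21*c) = 0 by linear_combination h2) with h | h
        · exact absurd (by linarith : c = 0) hc
        · linarith
      subst hac
      nlinarith [h1]
  · have he2 : (0:ℚ) < e^2 := by positivity
    have hP : (0:ℚ) < c^4 + 12*c^3*e + 94*c^2*e^2 + 284*c*e^3 + 1513*e^4 := by
      nlinarith [sq_nonneg (c^2 + 6*c*e + 10*e^2), sq_nonneg (e*(19*c + 41*e)), mul_pos he2 he2]
    have hR : (c + 4*e) * ((c^2 - 22*c*e - 67*e^2)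
        * (c^4 + 12*c^3*e + 94*c^2*e^2 + 284*c*e^3 + 1513*e^4)) = 0 := by
      have key : e^2 * ((-512) * ((c + 4*e) * ((c^2 - 22*c*e - 67*e^2)
          * (c^4 + 12*c^3*e + 94*c^2*e^2 + 284*c*e^3 + 1513*e^4)))) = 0 := by
        linear_combination
          (e^2*((-169104)*e^5 + (-109608)*c*e^4 + (-22344)*c^2*e^3 + (-2392)*c^3*e^2
            + (-168)*c^4*e + 2272*b*e^4 + 2072*b*c*e^3 + 664*b*c^2*e^2 + 104*b*c^3*e
            + 8*b*c^4)) * h2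
          + (e^2*((-31220)*e^5 + (-19244)*c*e^4 + (-4956)*c^2*e^3 + (-1036)*c^3*e^2
            + (-112)*c^4*e + (-8)*c^5 + 284*b*e^4 + 188*b*c*e^3 + 36*b*c^2*e^2
            + 4*b*c^3*e)) * h1
          - (e*((-169104)*c*e^5 + (-109608)*c^2*e^4 + (-22344)*c^3*e^3 + (-2392)*c^4*e^2
            + (-168)*c^5*e + (-31220)*b*e^5 + (-16972)*b*c*e^4 + (-2884)*b*c^2*e^3
            + (-372)*b*c^3*e^2 + (-8)*b*c^4*e + 284*b^2*e^4 + 188*b^2*c*e^3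
            + 36*b^2*c^2*e^2 + 4*b^2*c^3*e)) * h3
      rcases mul_eq_zero.mp key with h | h
      · exact absurd h (by positivity)
      · linarith
    rcases mul_eq_zero.mp hR with h4e | hX
    · have hc : c = -4*e := by linarith
      subst hc
      have hb : b = 9*e := by
        have h148 : 148*e^2*(b - 9*e) = 0 := by linear_combination e*h1 - b*h3
        rcases mul_eq_zero.mp h148 with h | h
        · exact absurd h (by positivity)
        · linarith
      subst hb
      have ha : a = -74*e := by
        have h2e : 2*e*(a + 74*e) = 0 := by linear_combination h3
        rcases mul_eq_zero.mp h2e with h | h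
        · exact absurd (by linarith : e = 0) he
        · linarith
      subst ha
      exact Or.inr ⟨148*e, by simpa using he, by linear_combination -h0⟩
    · rcases mul_eq_zero.mp hX with hq | hP0
      · exfalso
        have h188 : ((c - 11*e)/e)^2 = ((188:ℕ):ℚ) := by
          push_cast
          rw [div_pow, show (c - 11*e)^2 = 188*e^2 by linear_combination hq]
          field_simp
        exact rat_sq_ne 188 13 (by norm_num) (by norm_num) _ h188
      · exact absurd hP0 (by linarith)

/-! ### Elimination over ℚ : classification of square roots of rationals in `K₂` -/

lemma elimK2 (a b c e q : ℚ)
    (h3 : 2*a*e + 2*b*c - 4*c^2 - 8*b*e + 20*c*e - 180*e^2 = 0)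
    (h2 : b^2 + 2*a*c - 6*c^2 - 12*b*e - 280*c*e - 1085*e^2 = 0)
    (h1 : 2*a*b - 164*c^2 - 328*b*e - 2050*c*e + 5084*e^2 = 0)
    (h0 : a^2 - 1681*c^2 - 3362*b*e + 13448*c*e - 16810*e^2 = q) :
    (∃ r : ℚ, q = r^2) ∨ (∃ r : ℚ, r ≠ 0 ∧ q = 5*r^2) := by
  rcases eq_or_ne e 0 with he | he
  · subst he
    rcases eq_or_ne c 0 with hc | hc
    · subst hc
      have hb : b = 0 := by nlinarith [h2]
      subst hb
      exact Or.inl ⟨a, by linarith⟩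
    · exfalso
      have hc2 : 0 < c^2 := by positivity
      have hbc : b = 2*c := by
        rcases mul_eq_zero.mp (show 2*c*(b - 2*c) = 0 by linear_combination h3) with h | h
        · exact absurd (by linarith : c = 0) hc
        · linarith
      subst hbc
      have hac : a = c := by
        rcases mul_eq_zero.mp (show 2*c*(a - c) = 0 by linear_combination h2) with h | h
        · exact absurd (by linarith : c = 0) hc
        · linarith
      subst hac
      nlinarith [h1]
  · have he2 : (0:ℚ) < e^2 := by positivity
    have hP : (0:ℚ) < c^4 - 12*c^3*e + 54*c^2*e^2 + 52*c*e^3 + 1121*e^4 := by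
      nlinarith [sq_nonneg (c^2 - 6*c*e + 5*e^2), sq_nonneg (e*(c + 7*e)), mul_pos he2 he2]
    have hR : (c - 4*e) * ((c^2 + 14*c*e - 31*e^2)
        * (c^4 - 12*c^3*e + 54*c^2*e^2 + 52*c*e^3 + 1121*e^4)) = 0 := by
      have key : e^2 * (1280 * ((c - 4*e) * ((c^2 + 14*c*e - 31*e^2)
          * (c^4 - 12*c^3*e + 54*c^2*e^2 + 52*c*e^3 + 1121*e^4)))) = 0 := by
        linear_combination
          (e^2*((-102416)*e^5 + 71912*c*e^4 + (-8968)*c^2*e^3 + (-200)*c^3*e^2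
            + (-8)*c^4*e + (-416)*b*e^4 + (-760)*b*c*e^3 + 504*b*c^2*e^2
            + (-104)*b*c^3*e + 8*b*c^4)) * h2
          + (e^2*(13140*e^5 + (-4300)*c*e^4 + 1036*c^2*e^3 + (-636)*c^3*e^2 + 112*c^4*e
            + (-8)*c^5 + 52*b*e^4 + 108*b*c*e^3 + (-36)*b*c^2*e^2 + 4*b*c^3*e)) * h1
          - (e*((-102416)*c*e^5 + 71912*c^2*e^4 + (-8968)*c^3*e^3 + (-200)*c^4*e^2
            + (-8)*c^5*e + 13140*b*e^5 + (-4716)*b*c*e^4 + 276*b*c^2*e^3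
            + (-132)*b*c^3*e^2 + 8*b*c^4*e + 52*b^2*e^4 + 108*b^2*c*e^3
            + (-36)*b^2*c^2*e^2 + 4*b^2*c^3*e)) * h3
      rcases mul_eq_zero.mp key with h | h
      · exact absurd h (by positivity)
      · linarith
    rcases mul_eq_zero.mp hR with h4e | hX
    · have hc : c = 4*e := by linarith
      subst hc
      have hb : b = -35*e := by
        have h164 : (-164)*e^2*(b + 35*e) = 0 := by linear_combination e*h1 - b*h3
        rcases mul_eq_zero.mp h164 with h | h
        · exact absurd (show e^2 = 0 by linarith) (by positivity)
        · linarith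
      subst hb
      have ha : a = 82*e := by
        have h2e : 2*e*(a - 82*e) = 0 := by linear_combination h3
        rcases mul_eq_zero.mp h2e with h | h
        · exact absurd (by linarith : e = 0) he
        · linarith
      subst ha
      exact Or.inr ⟨164*e, by simpa using he, by linear_combination -h0⟩
    · rcases mul_eq_zero.mp hX with hq | hP0
      · exfalso
        have h80 : ((c + 7*e)/e)^2 = ((80:ℕ):ℚ) := by
          push_cast
          rw [div_pow, show (c + 7*e)^2 = 80*e^2 by linear_combination hq]
          field_simp
        exact rat_sq_ne 80 8 (by norm_num) (by norm_num) _ h80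
      · exact absurd hP0 (by linarith)

/-! ### Generic facts about `AdjoinRoot` of a quartic -/

open AdjoinRoot

lemma indep4 (p : ℚ[X]) (hp : p ≠ 0) (hdeg : p.natDegree = 4) (a0 a1 a2 a3 : ℚ)
    (h : algebraMap ℚ _ a0 + algebraMap ℚ _ a1 * root p + algebraMap ℚ _ a2 * root p ^ 2
      + algebraMap ℚ _ a3 * root p ^ 3 = 0) : a0 = 0 ∧ a1 = 0 ∧ a2 = 0 ∧ a3 = 0 := by
  have hdim : (AdjoinRoot.powerBasis hp).dim = 4 := by
    rw [AdjoinRoot.powerBasis_dim, hdeg]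
  set b := (AdjoinRoot.powerBasis hp).basis.reindex (finCongr hdim) with hbdef
  have hb : ∀ i : Fin 4, b i = root p ^ (i : ℕ) := by
    intro i
    rw [hbdef, Module.Basis.reindex_apply, PowerBasis.basis_eq_pow, AdjoinRoot.powerBasis_gen]
    simp [Fin.coe_cast]
  have hli := b.linearIndependent
  rw [Fintype.linearIndependent_iff] at hli
  have key := hli ![a0, a1, a2, a3] ?_
  · exact ⟨key 0, key 1, key 2, key 3⟩
  · rw [Fin.sum_univ_four]
    simp only [hb, Matrix.cons_val_zero, Matrix.cons_val_one, Matrix.head_cons,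
      Matrix.cons_val_two, Matrix.tail_cons, Matrix.cons_val_three, Algebra.smul_def,
      show ((0 : Fin 4) : ℕ) = 0 from rfl, show ((1 : Fin 4) : ℕ) = 1 from rfl,
      show ((2 : Fin 4) : ℕ) = 2 from rfl, show ((3 : Fin 4) : ℕ) = 3 from rfl,
      pow_zero, pow_one, mul_one]
    linear_combination h

lemma repr4 (p : ℚ[X]) (hp : p ≠ 0) (hdeg : p.natDegree = 4) (z : AdjoinRoot p) :
    ∃ a b c e : ℚ, z = algebraMap ℚ _ a + algebraMap ℚ _ b * root p
      + algebraMap ℚ _ c * root p ^ 2 + algebraMap ℚ _ e * root p ^ 3 := by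
  have hdim : (AdjoinRoot.powerBasis hp).dim = 4 := by
    rw [AdjoinRoot.powerBasis_dim, hdeg]
  set b := (AdjoinRoot.powerBasis hp).basis.reindex (finCongr hdim) with hbdef
  have hb : ∀ i : Fin 4, b i = root p ^ (i : ℕ) := by
    intro i
    rw [hbdef, Module.Basis.reindex_apply, PowerBasis.basis_eq_pow, AdjoinRoot.powerBasis_gen]
    simp [Fin.coe_cast]
  refine ⟨b.repr z 0, b.repr z 1, b.repr z 2, b.repr z 3, ?_⟩
  have hz := b.sum_repr z
  rw [Fin.sum_univ_four] at hz
  simp only [hb, Algebra.smul_def,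
    show ((0 : Fin 4) : ℕ) = 0 from rfl, show ((1 : Fin 4) : ℕ) = 1 from rfl,
    show ((2 : Fin 4) : ℕ) = 2 from rfl, show ((3 : Fin 4) : ℕ) = 3 from rfl,
    pow_zero, pow_one, mul_one] at hz
  linear_combination -hz

/-! ### The two specific quartics -/

noncomputable abbrev p1 : ℚ[X] := (X : Polynomial ℚ) ^ 4 - 4 * X ^ 3 + 46 * X ^ 2 - 148 * X + C 1369
noncomputable abbrev p2 : ℚ[X] := (X : Polynomial ℚ) ^ 4 + 4 * X ^ 3 + 6 * X ^ 2 + 164 * X + C 1681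

lemma p1_natDegree : p1.natDegree = 4 := by
  unfold p1; compute_degree!

lemma p1_ne_zero : p1 ≠ 0 := fun h => by simpa [h] using p1_natDegree

lemma p2_natDegree : p2.natDegree = 4 := by
  unfold p2; compute_degree!

lemma p2_ne_zero : p2 ≠ 0 := fun h => by simpa [h] using p2_natDegree

lemma root_p1_rel : (root p1)^4 = 4*(root p1)^3 - 46*(root p1)^2 + 148*(root p1) - 1369 := by
  have h : aeval (root p1) p1 = 0 := by rw [AdjoinRoot.aeval_eq, AdjoinRoot.mk_self]
  simp only [map_add, map_sub, map_mul, map_pow, aeval_X, aeval_C, map_ofNat] at h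
  linear_combination h

lemma root_p2_rel : (root p2)^4 = -4*(root p2)^3 - 6*(root p2)^2 - 164*(root p2) - 1681 := by
  have h : aeval (root p2) p2 = 0 := by rw [AdjoinRoot.aeval_eq, AdjoinRoot.mk_self]
  simp only [map_add, map_sub, map_mul, map_pow, aeval_X, aeval_C, map_ofNat] at h
  linear_combination h

lemma sq_classify1 (z : AdjoinRoot p1) (q : ℚ) (hz : z^2 = algebraMap ℚ _ q) :
    (∃ r : ℚ, q = r^2) ∨ (∃ r : ℚ, r ≠ 0 ∧ q = 2*r^2) := by
  obtain ⟨a, b, c, e, rfl⟩ := repr4 p1 p1_ne_zero p1_natDegree z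
  have h4 := root_p1_rel
  have hlin : algebraMap ℚ (AdjoinRoot p1)
        (a^2 - 1369*c^2 - 2738*b*e - 10952*c*e + 41070*e^2 - q)
      + algebraMap ℚ _ (2*a*b + 148*c^2 + 296*b*e - 1554*c*e - 9916*e^2) * root p1
      + algebraMap ℚ _ (b^2 + 2*a*c - 46*c^2 - 92*b*e - 72*c*e + 603*e^2) * root p1 ^ 2
      + algebraMap ℚ _ (2*a*e + 2*b*c + 4*c^2 + 8*b*e - 60*c*e - 156*e^2) * root p1 ^ 3
      = 0 := by
    simp only [map_add, map_sub, map_mul, map_pow, map_ofNat]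
    linear_combination hz - ((algebraMap ℚ (AdjoinRoot p1) c)^2
        + 8*(algebraMap ℚ (AdjoinRoot p1) c)*(algebraMap ℚ (AdjoinRoot p1) e)
        + 2*(algebraMap ℚ (AdjoinRoot p1) b)*(algebraMap ℚ (AdjoinRoot p1) e)
        - 30*(algebraMap ℚ (AdjoinRoot p1) e)^2
        + (4*(algebraMap ℚ (AdjoinRoot p1) e)^2
          + 2*(algebraMap ℚ (AdjoinRoot p1) c)*(algebraMap ℚ (AdjoinRoot p1) e)) * root p1
        + (algebraMap ℚ (AdjoinRoot p1) e)^2 * root p1 ^ 2) * h4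
  obtain ⟨h0, h1, h2, h3⟩ := indep4 p1 p1_ne_zero p1_natDegree _ _ _ _ hlin
  exact elimK1 a b c e q h3 h2 h1 (by linarith)

lemma sq_classify2 (z : AdjoinRoot p2) (q : ℚ) (hz : z^2 = algebraMap ℚ _ q) :
    (∃ r : ℚ, q = r^2) ∨ (∃ r : ℚ, r ≠ 0 ∧ q = 5*r^2) := by
  obtain ⟨a, b, c, e, rfl⟩ := repr4 p2 p2_ne_zero p2_natDegree z
  have h4 := root_p2_rel
  have hlin : algebraMap ℚ (AdjoinRoot p2)
        (a^2 - 1681*c^2 - 3362*b*e + 13448*c*e - 16810*e^2 - q)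
      + algebraMap ℚ _ (2*a*b - 164*c^2 - 328*b*e - 2050*c*e + 5084*e^2) * root p2
      + algebraMap ℚ _ (b^2 + 2*a*c - 6*c^2 - 12*b*e - 280*c*e - 1085*e^2) * root p2 ^ 2
      + algebraMap ℚ _ (2*a*e + 2*b*c - 4*c^2 - 8*b*e + 20*c*e - 180*e^2) * root p2 ^ 3
      = 0 := by
    simp only [map_add, map_sub, map_mul, map_pow, map_ofNat]
    linear_combination hz - ((algebraMap ℚ (AdjoinRoot p2) c)^2
        - 8*(algebraMap ℚ (AdjoinRoot p2) c)*(algebraMap ℚ (AdjoinRoot p2) e)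
        + 2*(algebraMap ℚ (AdjoinRoot p2) b)*(algebraMap ℚ (AdjoinRoot p2) e)
        + 10*(algebraMap ℚ (AdjoinRoot p2) e)^2
        + ((-4)*(algebraMap ℚ (AdjoinRoot p2) e)^2
          + 2*(algebraMap ℚ (AdjoinRoot p2) c)*(algebraMap ℚ (AdjoinRoot p2) e)) * root p2
        + (algebraMap ℚ (AdjoinRoot p2) e)^2 * root p2 ^ 2) * h4
  obtain ⟨h0, h1, h2, h3⟩ := indep4 p2 p2_ne_zero p2_natDegree _ _ _ _ hlin
  exact elimK2 a b c e q h3 h2 h1 (by linarith)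

/-- `√2 ∈ K₁`. -/
lemma exists_sqrt2 : ∃ w : AdjoinRoot p1, w^2 = algebraMap ℚ _ 2 := by
  refine ⟨algebraMap ℚ _ (1/148) * (- root p1 ^ 3 + 4 * root p1 ^ 2 - 9 * root p1 + 74), ?_⟩
  have h4 := root_p1_rel
  have hm : (- root p1 ^ 3 + 4 * root p1 ^ 2 - 9 * root p1 + 74)^2 = 43808 := by
    linear_combination (root p1 ^ 2 - 4 * root p1 - 28) * h4
  have h148 : algebraMap ℚ (AdjoinRoot p1) (1/148) * 148 = 1 := by
    rw [show ((148 : AdjoinRoot p1)) = algebraMap ℚ (AdjoinRoot p1) 148 from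
      (map_ofNat _ _).symm, ← map_mul]
    norm_num
  rw [show (algebraMap ℚ (AdjoinRoot p1)) 2 = (2 : AdjoinRoot p1) from map_ofNat _ _]
  linear_combination (algebraMap ℚ (AdjoinRoot p1) (1/148))^2 * hm
    + 2*(148*(algebraMap ℚ (AdjoinRoot p1) (1/148)) + 1) * h148

end Frob3741Aux

open Frob3741Aux AdjoinRoot in
/-- The quartic fields `K₁` and `K₂` are linearly disjoint over `ℚ`: any field `F`
admitting `ℚ`-algebra embeddings into both `K₁` and `K₂` equals `ℚ`
(i.e. has degree 1 over `ℚ`). -/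
theorem KFrob37_KFrob41_linearly_disjoint :
    ∀ (F : Type) [Field F] [Algebra ℚ F],
      Nonempty (F →ₐ[ℚ] KFrob37) → Nonempty (F →ₐ[ℚ] KFrob41) →
        Module.finrank ℚ F = 1 := by
  intro F _ _ h1 h2
  obtain ⟨φ⟩ := h1
  obtain ⟨ψ⟩ := h2
  have φ' : F →ₐ[ℚ] AdjoinRoot p1 := φ
  have ψ' : F →ₐ[ℚ] AdjoinRoot p2 := ψ
  clear φ ψ
  -- K₁ is a 4-dimensional ℚ-vector space
  haveI : FiniteDimensional ℚ (AdjoinRoot p1) :=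
    Module.Finite.of_basis (AdjoinRoot.powerBasis p1_ne_zero).basis
  have hrank1 : Module.finrank ℚ (AdjoinRoot p1) = 4 := by
    rw [(AdjoinRoot.powerBasis p1_ne_zero).finrank, AdjoinRoot.powerBasis_dim, p1_natDegree]
  haveI : Nontrivial (AdjoinRoot p1) := by
    rw [← Module.finrank_pos_iff (R := ℚ)]
    rw [hrank1]; norm_num
  have hinj1 : Function.Injective φ' := φ'.toRingHom.injective
  haveI : FiniteDimensional ℚ F := FiniteDimensional.of_injective φ'.toLinearMap hinj1
  letI : Algebra F (AdjoinRoot p1) := φ'.toRingHom.toAlgebra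
  haveI : IsScalarTower ℚ F (AdjoinRoot p1) :=
    IsScalarTower.of_algebraMap_eq fun r => (φ'.commutes r).symm
  have tower := Module.finrank_mul_finrank ℚ F (AdjoinRoot p1)
  have hdvd : Module.finrank ℚ F ∣ 4 :=
    ⟨Module.finrank F (AdjoinRoot p1), by rw [tower, hrank1]⟩
  by_contra hne
  have hd : Module.finrank ℚ F = 2 ∨ Module.finrank ℚ F = 4 := by
    rcases (Nat.dvd_prime_pow Nat.prime_two).mp (show Module.finrank ℚ F ∣ 2^2 from hdvd)
      with ⟨k, hk2, hkeq⟩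
    interval_cases k
    · exact absurd hkeq (by simpa using hne)
    · left; simpa using hkeq
    · right; simpa using hkeq
  have main : ∀ (y : F) (qq : ℚ), (∀ r : ℚ, qq ≠ r^2) → y^2 = algebraMap ℚ F qq → False := by
    intro y qq hqns hyq
    have hz1 : (φ' y)^2 = algebraMap ℚ (AdjoinRoot p1) qq := by
      rw [← map_pow, hyq, AlgHom.commutes]
    have hz2 : (ψ' y)^2 = algebraMap ℚ (AdjoinRoot p2) qq := by
      rw [← map_pow, hyq, AlgHom.commutes]
    rcases sq_classify1 _ _ hz1 with ⟨r, hr⟩ | ⟨r, hr0, hr⟩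
    · exact hqns r hr
    rcases sq_classify2 _ _ hz2 with ⟨s, hs⟩ | ⟨s, hs0, hs⟩
    · exact hqns s hs
    have h10 : (2*(r/s))^2 = ((10:ℕ):ℚ) := by
      push_cast
      field_simp
      linear_combination 2*hs - 2*hr
    exact rat_sq_ne 10 3 (by norm_num) (by norm_num) _ h10
  rcases hd with hd2 | hd4
  · -- degree 2 : find an element of F whose square is a non-square rational
    obtain ⟨y0, hy0⟩ : ∃ y0 : F, ∀ r : ℚ, y0 ≠ algebraMap ℚ F r := by
      by_contra hcon
      push_neg at hcon
      have hsurj : Function.Surjective (Algebra.linearMap ℚ F) := by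
        intro y; obtain ⟨r, hr⟩ := hcon y; exact ⟨r, hr.symm⟩
      have hbij : Function.Bijective (Algebra.linearMap ℚ F) :=
        ⟨fun x y hxy => (algebraMap ℚ F).injective hxy, hsurj⟩
      have := (LinearEquiv.ofBijective (Algebra.linearMap ℚ F) hbij).finrank_eq
      rw [Module.finrank_self] at this
      omega
    have hdep : ¬ LinearIndependent ℚ ![(1:F), y0, y0^2] := by
      intro hli
      have := hli.fintype_card_le_finrank
      rw [hd2] at this
      simp at this
    rw [Fintype.not_linearIndependent_iff] at hdep
    obtain ⟨g, hsum, i, hgi⟩ := hdep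
    rw [Fin.sum_univ_three] at hsum
    simp only [Matrix.cons_val_zero, Matrix.cons_val_one, Matrix.head_cons,
      Matrix.cons_val_two, Matrix.tail_cons, Algebra.smul_def, mul_one] at hsum
    -- hsum : u (g 0) + u (g 1) * y0 + u (g 2) * y0^2 = 0
    have hg2 : g 2 ≠ 0 := by
      intro h2
      have hsum' : algebraMap ℚ F (g 0) + algebraMap ℚ F (g 1) * y0 = 0 := by
        rw [h2] at hsum; simpa using hsum
      rcases eq_or_ne (g 1) 0 with h1 | h1
      · have h0 : g 0 = 0 := by
          apply (algebraMap ℚ F).injective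
          rw [map_zero]
          rw [h1] at hsum'; simpa using hsum'
        fin_cases i
        · exact hgi h0
        · exact hgi h1
        · exact hgi h2
      · have hne1 : algebraMap ℚ F (g 1) ≠ 0 := fun h =>
          h1 ((algebraMap ℚ F).injective (by rw [h, map_zero]))
        refine hy0 (-(g 0)/(g 1)) ?_
        apply mul_left_cancel₀ hne1
        rw [← map_mul, show (g 1) * (-(g 0)/(g 1)) = -(g 0) by field_simp; try ring, map_neg]
        linear_combination hsum'
    set y' := algebraMap ℚ F (2 * g 2) * y0 + algebraMap ℚ F (g 1) with hy'
    have hy'sq : y'^2 = algebraMap ℚ F ((g 1)^2 - 4*((g 0)*(g 2))) := by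
      rw [hy']
      simp only [map_sub, map_mul, map_pow, map_ofNat]
      linear_combination (4 * algebraMap ℚ F (g 2)) * hsum
    have hy'not : ∀ r : ℚ, y' ≠ algebraMap ℚ F r := by
      intro r hr
      apply hy0 ((r - g 1)/(2 * g 2))
      have h2g2 : (2:ℚ) * g 2 ≠ 0 := by simpa using hg2
      have hne2 : algebraMap ℚ F (2 * g 2) ≠ 0 := fun h =>
        h2g2 ((algebraMap ℚ F).injective (by rw [h, map_zero]))
      apply mul_left_cancel₀ hne2
      rw [← map_mul, show (2 * g 2) * ((r - g 1)/(2 * g 2)) = r - g 1 by field_simp; try ring, map_sub]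
      linear_combination hr
    refine main y' ((g 1)^2 - 4*((g 0)*(g 2))) ?_ hy'sq
    intro r hr
    have hqr : algebraMap ℚ F ((g 1)^2 - 4*((g 0)*(g 2))) = (algebraMap ℚ F r)^2 := by
      rw [hr, map_pow]
    have hfac : (y' - algebraMap ℚ F r) * (y' + algebraMap ℚ F r) = 0 := by
      linear_combination hy'sq + hqr
    rcases mul_eq_zero.mp hfac with h | h
    · exact hy'not r (by linear_combination h)
    · exact hy'not (-r) (by rw [map_neg]; linear_combination h)
  · -- degree 4 : F ≅ K₁, pull back √2
    obtain ⟨w, hw⟩ := exists_sqrt2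
    have hsurj := (LinearMap.injective_iff_surjective_of_finrank_eq_finrank
      (by rw [hd4, hrank1])).mp (show Function.Injective φ'.toLinearMap from hinj1)
    obtain ⟨y, hy⟩ := hsurj w
    refine main y 2 ?_ ?_
    · intro r hr
      exact rat_sq_ne 2 1 (by norm_num) (by norm_num) r (by push_cast; linarith [hr.symm])
    · apply hinj1
      rw [map_pow, AlgHom.commutes, show φ' y = w from hy, hw]
end

section
/- The rational map φ₁ from the genus 2 curve C: y² = -96393(13x+12)(7x-13)(107x²-273x+252)(56x²+104x+31) to the elliptic curve E₁: y₁² = x₁³ + 5805x₁ - 285714, given by x₁ = -(156260x³ + 3627x + 86895)/(3(7x-13)(56x²+104x+31)) and y₁ = -4(13x-6)(214x²+273x+126)y/(9(7x-13)²(56x²+104x+31)²), is well-defined: whenever (x,y) satisfies the equation of C (and the denominators are nonzero), the pair (x₁,y₁) satisfies the equation of E₁. -/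
/-- The map `φ₁ : C → E₁` is well defined: if `(x, y)` lies on the genus 2 curve
`C : y² = -96393(13x+12)(7x-13)(107x²-273x+252)(56x²+104x+31)` and the denominators
are nonzero, then
`x₁ = -(156260x³ + 3627x + 86895)/(3(7x-13)(56x²+104x+31))`,
`y₁ = -4(13x-6)(214x²+273x+126)y/(9(7x-13)²(56x²+104x+31)²)`
satisfy `y₁² = x₁³ + 5805x₁ - 285714`, the equation of `E₁`. -/
theorem phi1_well_defined (x y : ℚ)
    (hC : y ^ 2 = -96393 * (13*x + 12) * (7*x - 13) *
      (107*x^2 - 273*x + 252) * (56*x^2 + 104*x + 31))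
    (h₁ : 7*x - 13 ≠ 0) (h₂ : 56*x^2 + 104*x + 31 ≠ 0) :
    let x₁ := -(156260*x^3 + 3627*x + 86895) / (3 * (7*x - 13) * (56*x^2 + 104*x + 31))
    let y₁ := -(4 * (13*x - 6) * (214*x^2 + 273*x + 126) * y) /
      (9 * (7*x - 13)^2 * (56*x^2 + 104*x + 31)^2)
    y₁ ^ 2 = x₁ ^ 3 + 5805 * x₁ - 285714 := by
  intro x₁ y₁
  simp only [x₁, y₁]
  have h₁' : x * 7 - 13 ≠ 0 := fun h => h₁ (by linear_combination h)
  have h₂' : x * (x * 56 + 104) + 31 ≠ 0 := fun h => h₂ (by linear_combination h)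
  field_simp
  linear_combination (16 * (13*x - 6)^2 * (214*x^2 + 273*x + 126)^2 *
    27) * hC
end

section
/- The rational map φ₂ from the genus 2 curve C: y² = -96393(13x+12)(7x-13)(107x²-273x+252)(56x²+104x+31) to the elliptic curve E₂': y₂² = x₂³ - 5115x₂ + 115414, given by x₂ = (47485x³ + 4173x² - 211380)/((13x+12)(107x²-273x+252)) and y₂ = -(12(7x+26))(14x²-52x+31)y/((13x+12)²(107x²-273x+252)²), is well-defined: whenever (x,y) satisfies the equation of C, the pair (x₂,y₂) satisfies the equation of E₂'. -/
/-- The map `φ₂ : C → E₂'` is well defined: if `(x, y)` lies on the genus 2 curve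
`C : y² = -96393(13x+12)(7x-13)(107x²-273x+252)(56x²+104x+31)` and the denominators
are nonzero, then
`x₂ = (47485x³ + 4173x² - 211380)/((13x+12)(107x²-273x+252))`,
`y₂ = -(12(7x+26))(14x²-52x+31)y/((13x+12)²(107x²-273x+252)²)`
satisfy `y₂² = x₂³ - 5115x₂ + 115414`, the equation of `E₂'`. -/
theorem phi2_well_defined (x y : ℚ)
    (hC : y ^ 2 = -96393 * (13*x + 12) * (7*x - 13) *
      (107*x^2 - 273*x + 252) * (56*x^2 + 104*x + 31))
    (h₁ : 13*x + 12 ≠ 0) (h₂ : 107*x^2 - 273*x + 252 ≠ 0) :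
    let x₂ := (47485*x^3 + 4173*x^2 - 211380) / ((13*x + 12) * (107*x^2 - 273*x + 252))
    let y₂ := -(12 * (7*x + 26) * (14*x^2 - 52*x + 31) * y) /
      ((13*x + 12)^2 * (107*x^2 - 273*x + 252)^2)
    y₂ ^ 2 = x₂ ^ 3 - 5115 * x₂ + 115414 := by
  intro x₂ y₂
  simp only [x₂, y₂]
  have h₃ : x * 13 + 12 ≠ 0 := by contrapose! h₁; linarith
  have h₄ : x * (x * 107 - 273) + 252 ≠ 0 := by contrapose! h₂; linarith
  field_simp
  ring_nf
  ring_nf at hC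
  rw [hC]
  ring
end
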